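/- Let N > 1 be an integer, b, c real constants with c ≠ 0, and suppose Ker(I − A^N) = {0}. Then 𝓛 : X_N → X_N is bijective. Moreover, if g : ℕ × ℝ → ℝ is continuous in its second variable and N-periodic in its first variable, and there are positive constants r, δ with |g(t,x)| ≤ δ for all t ∈ ℕ and all x ∈ [−2r, 2r], and ‖𝓛^{−1}‖·δ < r, then there exists an N-periodic function y : ℕ → ℝ satisfying y(t+2) + b·y(t+1) + c·y(t) = g(t, y(t)) for all t ∈ ℕ, and such that sup_t |(y(t), y(t+1))| ≤ r. -/

import Mathlib

open Matrix

/-- The Euclidean norm of a vector in `ℝ²`. -/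
noncomputable def euclNorm2 (v : Fin 2 → ℝ) : ℝ := Real.sqrt (v 0 ^ 2 + v 1 ^ 2)

/-- The supremum norm on functions `ℕ → ℝ²` (with the Euclidean norm on `ℝ²`). -/
noncomputable def supNorm (x : ℕ → Fin 2 → ℝ) : ℝ := ⨆ t : ℕ, euclNorm2 (x t)

namespace NRE

def eps (a b : Fin 3) : ZMod 2 := if (a = 0 ∧ b = 1) ∨ (a = 1 ∧ b = 0) then 1 else 0

lemma eps_ne0 {a b : Fin 3} (ha : a ≠ 0) (hb : b ≠ 0) : eps a b = 0 := by
  revert ha hb; revert a b; decide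

lemma eps_ne1 {a b : Fin 3} (ha : a ≠ 1) (hb : b ≠ 1) : eps a b = 0 := by
  revert ha hb; revert a b; decide

lemma eps_full (a b c : Fin 3) :
    eps a b + eps a c + eps b c = if a ≠ b ∧ a ≠ c ∧ b ≠ c then 1 else 0 := by
  revert a b c; decide

lemma onedim (f : ℕ → Fin 3) (m : ℕ) (h2 : ∀ i ≤ m, f i ≠ 2) :
    (Finset.range m).sum (fun i => eps (f i) (f (i+1))) = if f 0 = f m then 0 else 1 := by
  induction m with
  | zero => simp
  | succ k ih =>
    rw [Finset.sum_range_succ, ih (fun i hi => h2 i (by omega))]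
    have h0 := h2 0 (by omega)
    have hk := h2 k (by omega)
    have hk1 := h2 (k+1) le_rfl
    revert h0 hk hk1
    generalize f 0 = a; generalize f k = b; generalize f (k+1) = c
    revert a b c; decide

/-- 2D Sperner's lemma on the triangulated corner triangle of side `n`. -/
lemma sperner (n : ℕ) (hn : 0 < n) (l : ℕ → ℕ → Fin 3)
    (hbot : ∀ i, i ≤ n → l i 0 ≠ 2)
    (hleft : ∀ j, j ≤ n → l 0 j ≠ 1)
    (hhyp : ∀ i j, i + j = n → l i j ≠ 0) :
    ∃ i j : ℕ, i + j + 1 ≤ n ∧ ∃ p₀ p₁ p₂ : ℕ × ℕ,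
      (∀ p ∈ [p₀, p₁, p₂], (p.1 = i ∨ p.1 = i + 1) ∧ (p.2 = j ∨ p.2 = j + 1) ∧ p.1 + p.2 ≤ n) ∧
      l p₀.1 p₀.2 = 0 ∧ l p₁.1 p₁.2 = 1 ∧ l p₂.1 p₂.2 = 2 := by
  classical
  set B : Finset (ℕ × ℕ) := Finset.range n ×ˢ Finset.range n with hB
  set L : Finset (ℕ × ℕ) := B.filter (fun p => p.1 + p.2 + 1 ≤ n) with hL
  set U : Finset (ℕ × ℕ) := B.filter (fun p => p.1 + p.2 + 2 ≤ n) with hU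
  have memL : ∀ p : ℕ × ℕ, p ∈ L ↔ p.1 + p.2 + 1 ≤ n := by
    intro p
    simp only [hL, hB, Finset.mem_filter, Finset.mem_product, Finset.mem_range]
    omega
  have memU : ∀ p : ℕ × ℕ, p ∈ U ↔ p.1 + p.2 + 2 ≤ n := by
    intro p
    simp only [hU, hB, Finset.mem_filter, Finset.mem_product, Finset.mem_range]
    omega
  set eH : ℕ × ℕ → ZMod 2 := fun p => eps (l p.1 p.2) (l (p.1+1) p.2) with heH
  set eV : ℕ × ℕ → ZMod 2 := fun p => eps (l p.1 p.2) (l p.1 (p.2+1)) with heV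
  set eD : ℕ × ℕ → ZMod 2 := fun p => eps (l (p.1+1) p.2) (l p.1 (p.2+1)) with heD
  set dL : ℕ × ℕ → ZMod 2 := fun p => eH p + eV p + eD p with hdL
  set dU : ℕ × ℕ → ZMod 2 := fun p =>
    eD p + eps (l (p.1+1) p.2) (l (p.1+1) (p.2+1)) + eps (l p.1 (p.2+1)) (l (p.1+1) (p.2+1)) with hdU
  -- embeddings
  have inj1 : Function.Injective (fun p : ℕ × ℕ => (p.1 + 1, p.2)) := by
    intro p q h; simpa [Prod.ext_iff] using h
  have inj2 : Function.Injective (fun p : ℕ × ℕ => (p.1, p.2 + 1)) := by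
    intro p q h; simpa [Prod.ext_iff] using h
  set E1 : ℕ × ℕ ↪ ℕ × ℕ := ⟨_, inj1⟩ with hE1
  set E2 : ℕ × ℕ ↪ ℕ × ℕ := ⟨_, inj2⟩ with hE2
  -- the three cancellation claims
  have claimD : (∑ p ∈ L, eD p) + (∑ p ∈ U, eD p) = 0 := by
    have hUL : U ⊆ L := by intro p hp; rw [memL]; rw [memU] at hp; omega
    rw [← Finset.sum_sdiff hUL]
    have hz : ∑ p ∈ L \ U, eD p = 0 := by
      apply Finset.sum_eq_zero
      intro p hp
      rw [Finset.mem_sdiff, memL, memU] at hp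
      exact eps_ne0 (hhyp _ _ (by omega)) (hhyp _ _ (by omega))
    rw [add_assoc, CharTwo.add_self_eq_zero, add_zero]
    exact hz
  have claimV : (∑ p ∈ L, eV p) + (∑ p ∈ U, eV (E1 p)) = 0 := by
    rw [← Finset.sum_map U E1 eV]
    have hsub : U.map E1 ⊆ L := by
      intro p hp
      rw [Finset.mem_map] at hp
      obtain ⟨q, hq, rfl⟩ := hp
      rw [memU] at hq; rw [memL]; simp only [hE1, Function.Embedding.coeFn_mk]; omega
    rw [← Finset.sum_sdiff hsub]
    have hz : ∑ p ∈ L \ U.map E1, eV p = 0 := by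
      apply Finset.sum_eq_zero
      intro p hp
      rw [Finset.mem_sdiff, memL] at hp
      obtain ⟨hp1, hp2⟩ := hp
      have hp10 : p.1 = 0 := by
        by_contra h
        apply hp2
        rw [Finset.mem_map]
        refine ⟨(p.1 - 1, p.2), ?_, ?_⟩
        · rw [memU]; omega
        · simp only [hE1, Function.Embedding.coeFn_mk]
          ext <;> simp <;> omega
      rw [heV]
      simp only [hp10]
      exact eps_ne1 (hleft _ (by omega)) (hleft _ (by omega))
    rw [add_assoc, CharTwo.add_self_eq_zero, add_zero]
    exact hz
  have claimH : (∑ p ∈ L, eH p) + (∑ p ∈ U, eH (E2 p)) = 1 := by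
    rw [← Finset.sum_map U E2 eH]
    have hsub : U.map E2 ⊆ L := by
      intro p hp
      rw [Finset.mem_map] at hp
      obtain ⟨q, hq, rfl⟩ := hp
      rw [memU] at hq; rw [memL]; simp only [hE2, Function.Embedding.coeFn_mk]; omega
    rw [← Finset.sum_sdiff hsub]
    have hrow : L \ U.map E2 = (Finset.range n).map ⟨fun i => (i, 0), by exact Prod.mk_left_injective 0⟩ := by
      ext p
      rw [Finset.mem_sdiff, memL, Finset.mem_map, Finset.mem_map]
      simp only [Function.Embedding.coeFn_mk, Finset.mem_range, hE2]
      constructor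
      · rintro ⟨h1, h2⟩
        refine ⟨p.1, by omega, ?_⟩
        have hp2 : p.2 = 0 := by
          by_contra h
          apply h2
          refine ⟨(p.1, p.2 - 1), ?_, ?_⟩
          · rw [memU]; omega
          · ext <;> simp <;> omega
        ext <;> simp [hp2]
      · rintro ⟨i, hi, rfl⟩
        constructor
        · omega
        · rintro ⟨q, hq, hqe⟩
          rw [memU] at hq
          have : q.2 + 1 = 0 := congrArg Prod.snd hqe
          omega
    rw [hrow, Finset.sum_map]
    have hz : ∑ i ∈ Finset.range n, eH ((⟨fun i => (i, 0), by exact Prod.mk_left_injective 0⟩ : ℕ ↪ ℕ × ℕ) i) = 1 := by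
      simp only [Function.Embedding.coeFn_mk, heH]
      rw [onedim (fun i => l i 0) n hbot]
      have h00 : l 0 0 = 0 := by
        have h1 := hbot 0 (by omega); have h2 := hleft 0 (by omega)
        revert h1 h2; generalize l 0 0 = a; revert a; decide
      have hn0 : l n 0 = 1 := by
        have h1 := hbot n le_rfl; have h2 := hhyp n 0 (by omega)
        revert h1 h2; generalize l n 0 = a; revert a; decide
      rw [h00, hn0]; simp
    rw [add_assoc, CharTwo.add_self_eq_zero, add_zero]
    exact hz
  -- total sum is 1
  have hS : (∑ p ∈ L, dL p) + (∑ p ∈ U, dU p) = 1 := by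
    have e1 : ∑ p ∈ L, dL p = (∑ p ∈ L, eH p) + (∑ p ∈ L, eV p) + (∑ p ∈ L, eD p) := by
      rw [← Finset.sum_add_distrib, ← Finset.sum_add_distrib]
    have e2 : ∑ p ∈ U, dU p
        = (∑ p ∈ U, eD p) + (∑ p ∈ U, eV (E1 p)) + (∑ p ∈ U, eH (E2 p)) := by
      rw [← Finset.sum_add_distrib, ← Finset.sum_add_distrib]
      apply Finset.sum_congr rfl
      intro p hp
      simp only [hdU, heD, heV, heH, hE1, hE2, Function.Embedding.coeFn_mk]
    rw [e1, e2]
    have : (∑ p ∈ L, eH p) + (∑ p ∈ L, eV p) + (∑ p ∈ L, eD p) +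
        ((∑ p ∈ U, eD p) + (∑ p ∈ U, eV (E1 p)) + (∑ p ∈ U, eH (E2 p)))
        = ((∑ p ∈ L, eD p) + (∑ p ∈ U, eD p)) + ((∑ p ∈ L, eV p) + (∑ p ∈ U, eV (E1 p)))
          + ((∑ p ∈ L, eH p) + (∑ p ∈ U, eH (E2 p))) := by ring
    rw [this, claimD, claimV, claimH]; ring
  -- extract a fully labeled triangle
  by_cases hex : (∃ p ∈ L, dL p ≠ 0) ∨ (∃ p ∈ U, dU p ≠ 0)
  · -- get distinct labels on an explicit triangle
    have key : ∃ (i j : ℕ) (v₀ v₁ v₂ : ℕ × ℕ), i + j + 1 ≤ n ∧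
        (∀ p ∈ [v₀, v₁, v₂], (p.1 = i ∨ p.1 = i + 1) ∧ (p.2 = j ∨ p.2 = j + 1) ∧ p.1 + p.2 ≤ n) ∧
        l v₀.1 v₀.2 ≠ l v₁.1 v₁.2 ∧ l v₀.1 v₀.2 ≠ l v₂.1 v₂.2 ∧ l v₁.1 v₁.2 ≠ l v₂.1 v₂.2 := by
      rcases hex with ⟨p, hpL, hpd⟩ | ⟨p, hpU, hpd⟩
      · rw [memL] at hpL
        have hpd' : (if (l p.1 p.2 ≠ l (p.1+1) p.2 ∧ l p.1 p.2 ≠ l p.1 (p.2+1)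
            ∧ l (p.1+1) p.2 ≠ l p.1 (p.2+1)) then (1 : ZMod 2) else 0) ≠ 0 := by
          simpa only [hdL, heH, heV, heD, eps_full] using hpd
        have hfull : l p.1 p.2 ≠ l (p.1+1) p.2 ∧ l p.1 p.2 ≠ l p.1 (p.2+1)
            ∧ l (p.1+1) p.2 ≠ l p.1 (p.2+1) := by
          by_contra h; rw [if_neg h] at hpd'; exact hpd' rfl
        refine ⟨p.1, p.2, (p.1, p.2), (p.1+1, p.2), (p.1, p.2+1), hpL, ?_, hfull.1, hfull.2.1, hfull.2.2⟩
        intro q hq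
        simp only [List.mem_cons, List.not_mem_nil, or_false] at hq
        rcases hq with rfl | rfl | rfl <;> simp <;> omega
      · rw [memU] at hpU
        have hpd' : (if (l (p.1+1) p.2 ≠ l p.1 (p.2+1) ∧ l (p.1+1) p.2 ≠ l (p.1+1) (p.2+1)
            ∧ l p.1 (p.2+1) ≠ l (p.1+1) (p.2+1)) then (1 : ZMod 2) else 0) ≠ 0 := by
          simpa only [hdU, heD, eps_full] using hpd
        have hfull : l (p.1+1) p.2 ≠ l p.1 (p.2+1) ∧ l (p.1+1) p.2 ≠ l (p.1+1) (p.2+1)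
            ∧ l p.1 (p.2+1) ≠ l (p.1+1) (p.2+1) := by
          by_contra h; rw [if_neg h] at hpd'; exact hpd' rfl
        refine ⟨p.1, p.2, (p.1+1, p.2), (p.1, p.2+1), (p.1+1, p.2+1), by omega, ?_, hfull.1, hfull.2.1, hfull.2.2⟩
        intro q hq
        simp only [List.mem_cons, List.not_mem_nil, or_false] at hq
        rcases hq with rfl | rfl | rfl <;> simp <;> omega
    obtain ⟨i, j, v₀, v₁, v₂, hij, hmem, h01, h02, h12⟩ := key
    have hpick : ∀ k : Fin 3, k = l v₀.1 v₀.2 ∨ k = l v₁.1 v₁.2 ∨ k = l v₂.1 v₂.2 := by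
      revert h01 h02 h12
      generalize l v₀.1 v₀.2 = a; generalize l v₁.1 v₁.2 = b; generalize l v₂.1 v₂.2 = c
      revert a b c; decide
    obtain h0 := hpick 0
    obtain h1 := hpick 1
    obtain h2 := hpick 2
    have get : ∀ k : Fin 3, (k = l v₀.1 v₀.2 ∨ k = l v₁.1 v₁.2 ∨ k = l v₂.1 v₂.2) →
        ∃ q ∈ [v₀, v₁, v₂], l q.1 q.2 = k := by
      intro k hk
      rcases hk with hk | hk | hk
      · exact ⟨v₀, by simp, hk.symm⟩
      · exact ⟨v₁, by simp, hk.symm⟩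
      · exact ⟨v₂, by simp, hk.symm⟩
    obtain ⟨q₀, hq₀m, hq₀⟩ := get 0 h0
    obtain ⟨q₁, hq₁m, hq₁⟩ := get 1 h1
    obtain ⟨q₂, hq₂m, hq₂⟩ := get 2 h2
    refine ⟨i, j, hij, q₀, q₁, q₂, ?_, hq₀, hq₁, hq₂⟩
    intro p hp
    simp only [List.mem_cons, List.not_mem_nil, or_false] at hp
    rcases hp with rfl | rfl | rfl
    · exact hmem _ hq₀m
    · exact hmem _ hq₁m
    · exact hmem _ hq₂m
  · push_neg at hex
    exfalso
    have hz1 : ∑ p ∈ L, dL p = 0 := Finset.sum_eq_zero hex.1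
    have hz2 : ∑ p ∈ U, dU p = 0 := Finset.sum_eq_zero hex.2
    rw [hz1, hz2] at hS
    simp at hS


noncomputable def bary (k : Fin 3) (v : Fin 2 → ℝ) : ℝ :=
  if k = 0 then 1 - v 0 - v 1 else if k = 1 then v 0 else v 1

def inT (v : Fin 2 → ℝ) : Prop := 0 ≤ v 0 ∧ 0 ≤ v 1 ∧ v 0 + v 1 ≤ 1

lemma bary0 (v : Fin 2 → ℝ) : bary 0 v = 1 - v 0 - v 1 := rfl
lemma bary1 (v : Fin 2 → ℝ) : bary 1 v = v 0 := rfl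
lemma bary2 (v : Fin 2 → ℝ) : bary 2 v = v 1 := rfl

lemma fin3_cases (k : Fin 3) : k = 0 ∨ k = 1 ∨ k = 2 := by
  fin_cases k
  · exact Or.inl rfl
  · exact Or.inr (Or.inl rfl)
  · exact Or.inr (Or.inr rfl)

lemma fin2_cases (c : Fin 2) : c = 0 ∨ c = 1 := by
  fin_cases c
  · exact Or.inl rfl
  · exact Or.inr rfl

lemma bary_sum (v : Fin 2 → ℝ) : bary 0 v + bary 1 v + bary 2 v = 1 := by
  rw [bary0, bary1, bary2]; ring

lemma bary_nonneg {v : Fin 2 → ℝ} (hv : inT v) (k : Fin 3) : 0 ≤ bary k v := by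
  obtain ⟨h0, h1, h2⟩ := hv
  rcases fin3_cases k with rfl | rfl | rfl
  · rw [bary0]; linarith
  · rw [bary1]; linarith
  · rw [bary2]; linarith

lemma bary_continuous (k : Fin 3) : Continuous (bary k) := by
  rcases fin3_cases k with rfl | rfl | rfl
  · have : bary 0 = fun v : Fin 2 → ℝ => 1 - v 0 - v 1 := rfl
    rw [this]; fun_prop
  · have : bary 1 = fun v : Fin 2 → ℝ => v 0 := rfl
    rw [this]; fun_prop
  · have : bary 2 = fun v : Fin 2 → ℝ => v 1 := rfl
    rw [this]; fun_prop

lemma exists_label (f : (Fin 2 → ℝ) → (Fin 2 → ℝ)) (v : Fin 2 → ℝ)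
    (hv : inT v) (hfv : inT (f v)) :
    ∃ k : Fin 3, 0 < bary k v ∧ bary k (f v) ≤ bary k v := by
  by_contra hcon
  push_neg at hcon
  have key : ∀ k : Fin 3, bary k v ≤ bary k (f v) := by
    intro k
    rcases lt_or_eq_of_le (bary_nonneg hv k) with hk | hk
    · exact le_of_lt (hcon k hk)
    · rw [← hk]; exact bary_nonneg hfv k
  have hex : ∃ k : Fin 3, 0 < bary k v := by
    by_contra h
    push_neg at h
    have := bary_sum v
    have h0 := h 0; have h1 := h 1; have h2 := h 2
    linarith
  obtain ⟨k, hk⟩ := hex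
  have hstrict := hcon k hk
  have s1 := bary_sum v
  have s2 := bary_sum (f v)
  have k0 := key 0; have k1 := key 1; have k2 := key 2
  rcases fin3_cases k with rfl | rfl | rfl <;> linarith

lemma brouwer_corner (f : (Fin 2 → ℝ) → (Fin 2 → ℝ)) (hf : Continuous f)
    (hmaps : ∀ v, inT v → inT (f v)) : ∃ v, inT v ∧ f v = v := by
  classical
  -- for each n, a nearly-fixed triple from Sperner
  have H : ∀ n : ℕ, ∃ q : Fin 3 → (Fin 2 → ℝ), (∀ k, inT (q k)) ∧
      (∀ k, bary k (f (q k)) ≤ bary k (q k)) ∧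
      (∀ k c, |q k c - q 0 c| ≤ 1 / (n + 1)) := by
    intro n
    set m : ℕ := n + 1 with hm
    have hm0 : (0:ℝ) < (m:ℝ) := by positivity
    set pt : ℕ → ℕ → (Fin 2 → ℝ) := fun i j => ![(i:ℝ)/m, (j:ℝ)/m] with hpt
    have hpt0 : ∀ i j : ℕ, pt i j 0 = (i:ℝ)/m := fun i j => rfl
    have hpt1 : ∀ i j : ℕ, pt i j 1 = (j:ℝ)/m := fun i j => rfl
    have hptT : ∀ i j : ℕ, i + j ≤ m → inT (pt i j) := by
      intro i j hij
      refine ⟨?_, ?_, ?_⟩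
      · rw [hpt0]; positivity
      · rw [hpt1]; positivity
      · rw [hpt0, hpt1, ← add_div, div_le_one hm0]
        exact_mod_cast hij
    set l : ℕ → ℕ → Fin 3 := fun i j =>
      if h : i + j ≤ m then Classical.choose (exists_label f (pt i j) (hptT i j h)
        (hmaps _ (hptT i j h))) else 0 with hl
    have hlspec : ∀ i j (h : i + j ≤ m),
        0 < bary (l i j) (pt i j) ∧ bary (l i j) (f (pt i j)) ≤ bary (l i j) (pt i j) := by
      intro i j h
      simp only [hl, dif_pos h]
      exact Classical.choose_spec (exists_label f (pt i j) (hptT i j h) (hmaps _ (hptT i j h)))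
    have hbot : ∀ i, i ≤ m → l i 0 ≠ 2 := by
      intro i hi hcon2
      have := (hlspec i 0 (by omega)).1
      rw [hcon2, bary2, hpt1] at this
      norm_num at this
    have hleft : ∀ j, j ≤ m → l 0 j ≠ 1 := by
      intro j hj hcon2
      have := (hlspec 0 j (by omega)).1
      rw [hcon2, bary1, hpt0] at this
      norm_num at this
    have hhyp : ∀ i j, i + j = m → l i j ≠ 0 := by
      intro i j hij hcon2
      have := (hlspec i j (by omega)).1
      rw [hcon2, bary0, hpt0, hpt1] at this
      have he : (i:ℝ)/m + (j:ℝ)/m = 1 := by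
        rw [← add_div, div_eq_one_iff_eq (ne_of_gt hm0)]
        exact_mod_cast hij
      linarith
    obtain ⟨i, j, hij, p₀, p₁, p₂, hmem, h0, h1, h2⟩ :=
      sperner m (by omega) l hbot hleft hhyp
    set q : Fin 3 → (Fin 2 → ℝ) := fun k =>
      if k = 0 then pt p₀.1 p₀.2 else if k = 1 then pt p₁.1 p₁.2 else pt p₂.1 p₂.2 with hq
    have hq0 : q 0 = pt p₀.1 p₀.2 := rfl
    have hq1 : q 1 = pt p₁.1 p₁.2 := rfl
    have hq2 : q 2 = pt p₂.1 p₂.2 := rfl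
    refine ⟨q, ?_, ?_, ?_⟩
    · intro k
      rcases fin3_cases k with rfl | rfl | rfl
      · rw [hq0]; exact hptT _ _ (hmem p₀ (by simp)).2.2
      · rw [hq1]; exact hptT _ _ (hmem p₁ (by simp)).2.2
      · rw [hq2]; exact hptT _ _ (hmem p₂ (by simp)).2.2
    · intro k
      have key : ∀ p : ℕ × ℕ, p ∈ [p₀, p₁, p₂] → ∀ k : Fin 3, l p.1 p.2 = k →
          bary k (f (pt p.1 p.2)) ≤ bary k (pt p.1 p.2) := by
        intro p hp k hk
        have := (hlspec p.1 p.2 (hmem p hp).2.2).2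
        rwa [hk] at this
      rcases fin3_cases k with rfl | rfl | rfl
      · rw [hq0]; exact key p₀ (by simp) 0 h0
      · rw [hq1]; exact key p₁ (by simp) 1 h1
      · rw [hq2]; exact key p₂ (by simp) 2 h2
    · intro k c
      have hm0' : (0:ℝ) < (n:ℝ) + 1 := by positivity
      have close : ∀ a b e : ℕ, (a = e ∨ a = e + 1) → (b = e ∨ b = e + 1) →
          |(a:ℝ)/m - (b:ℝ)/m| ≤ 1 / (n+1) := by
        intro a b e ha hb
        have he : (a:ℝ)/m - (b:ℝ)/m = ((a:ℝ) - b)/m := by ring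
        have hmn : (m:ℝ) = (n:ℝ) + 1 := by rw [hm]; push_cast; ring
        rw [he, abs_div, abs_of_pos hm0, hmn]
        have hab : |(a:ℝ) - b| ≤ 1 := by
          rcases ha with rfl | rfl <;> rcases hb with rfl | rfl <;>
            (push_cast; rw [abs_le]; constructor <;> linarith)
        exact (div_le_div_iff_of_pos_right hm0').mpr hab
      have m₀ := hmem p₀ (by simp)
      have m₁ := hmem p₁ (by simp)
      have m₂ := hmem p₂ (by simp)
      rcases fin3_cases k with rfl | rfl | rfl
      · simp only [sub_self, abs_zero]; positivity
      · rw [hq1, hq0]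
        rcases fin2_cases c with rfl | rfl
        · rw [hpt0, hpt0]; exact close _ _ i m₁.1 m₀.1
        · rw [hpt1, hpt1]; exact close _ _ j m₁.2.1 m₀.2.1
      · rw [hq2, hq0]
        rcases fin2_cases c with rfl | rfl
        · rw [hpt0, hpt0]; exact close _ _ i m₂.1 m₀.1
        · rw [hpt1, hpt1]; exact close _ _ j m₂.2.1 m₀.2.1
  choose q hq1 hq2 hq3 using H
  -- compactness of the triangle
  have hTcomp : IsCompact {v : Fin 2 → ℝ | inT v} := by
    apply IsCompact.of_isClosed_subset (isCompact_Icc (a := (0 : Fin 2 → ℝ)) (b := 1))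
    · have : {v : Fin 2 → ℝ | inT v}
          = {v : Fin 2 → ℝ | 0 ≤ v 0} ∩ ({v | 0 ≤ v 1} ∩ {v | v 0 + v 1 ≤ 1}) := by
        ext v; simp [inT, Set.mem_setOf_eq, and_assoc]
      rw [this]
      exact ((isClosed_le continuous_const (continuous_apply 0)).inter
        ((isClosed_le continuous_const (continuous_apply 1)).inter
          (isClosed_le (by fun_prop) continuous_const)))
    · intro v hv
      obtain ⟨h0, h1, h2⟩ := hv
      rw [Set.mem_Icc]
      constructor <;> intro i <;> rcases fin2_cases i with rfl | rfl <;>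
        simp only [Pi.zero_apply, Pi.one_apply] <;> linarith
  obtain ⟨x, hxT, φ, hφ, hconv⟩ := hTcomp.tendsto_subseq (fun n => hq1 n 0)
  -- all three vertex sequences converge to x
  have hconvk : ∀ k : Fin 3, Filter.Tendsto (fun s => q (φ s) k) Filter.atTop (nhds x) := by
    intro k
    have hd : ∀ s : ℕ, dist (q (φ s) k) (q (φ s) 0) ≤ 1 / (φ s + 1) := by
      intro s
      rw [dist_pi_le_iff (by positivity)]
      intro c
      rw [Real.dist_eq]
      exact hq3 (φ s) k c
    have hd0 : Filter.Tendsto (fun s => dist (q (φ s) k) (q (φ s) 0)) Filter.atTop (nhds 0) := by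
      apply squeeze_zero (fun s => dist_nonneg) hd
      have h1 : Filter.Tendsto (fun s : ℕ => 1 / ((s : ℝ) + 1)) Filter.atTop (nhds 0) :=
        tendsto_one_div_add_atTop_nhds_zero_nat
      exact h1.comp hφ.tendsto_atTop
    -- combine
    have := hconv
    rw [Metric.tendsto_atTop] at this ⊢
    intro ε hε
    obtain ⟨s₀, hs₀⟩ := this (ε/2) (by linarith)
    obtain ⟨s₁, hs₁⟩ := Metric.tendsto_atTop.mp hd0 (ε/2) (by linarith)
    refine ⟨max s₀ s₁, fun s hs => ?_⟩
    have e1 := hs₀ s (le_trans (le_max_left _ _) hs)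
    have e2 := hs₁ s (le_trans (le_max_right _ _) hs)
    rw [Real.dist_eq] at e2
    have e2' : dist (q (φ s) k) (q (φ s) 0) < ε/2 := by
      have h := (abs_lt.mp e2).2
      linarith
    calc dist (q (φ s) k) x ≤ dist (q (φ s) k) (q (φ s) 0) + dist (q (φ s) 0) x := dist_triangle _ _ _
      _ < ε/2 + ε/2 := by exact add_lt_add e2' e1
      _ = ε := by ring
  -- pass the barycentric inequalities to the limit
  have hineq : ∀ k : Fin 3, bary k (f x) ≤ bary k x := by
    intro k
    have hL : Filter.Tendsto (fun s => bary k (f (q (φ s) k))) Filter.atTop (nhds (bary k (f x))) :=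
      ((bary_continuous k).tendsto _).comp ((hf.tendsto x).comp (hconvk k))
    have hR : Filter.Tendsto (fun s => bary k (q (φ s) k)) Filter.atTop (nhds (bary k x)) :=
      ((bary_continuous k).tendsto _).comp (hconvk k)
    exact le_of_tendsto_of_tendsto' hL hR (fun s => hq2 (φ s) k)
  have e0 := hineq 0
  have e1 := hineq 1
  have e2 := hineq 2
  simp only [bary0] at e0
  simp only [bary1] at e1
  simp only [bary2] at e2
  refine ⟨x, hxT, ?_⟩
  funext c
  rcases fin2_cases c with rfl | rfl
  · exact le_antisymm e1 (by linarith)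
  · exact le_antisymm e2 (by linarith)


/-- A continuous self-map of the plane with bounded range has a fixed point. -/
lemma bounded_fixed (F : (Fin 2 → ℝ) → (Fin 2 → ℝ)) (hF : Continuous F) (K : ℝ)
    (hK : ∀ v (i : Fin 2), |F v i| ≤ K) : ∃ v, F v = v := by
  have hK0 : 0 ≤ K := le_trans (abs_nonneg _) (hK 0 0)
  set s : ℝ := 3 * K + 3 with hs
  have hs0 : 0 < s := by simp only [hs]; linarith
  have hs3 : 0 < 3 * s := by linarith
  set φ : (Fin 2 → ℝ) → (Fin 2 → ℝ) := fun u c => 3 * s * u c - s with hφ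
  set ψ : (Fin 2 → ℝ) → (Fin 2 → ℝ) := fun w c => (w c + s) / (3 * s) with hψ
  set G : (Fin 2 → ℝ) → (Fin 2 → ℝ) := fun u => ψ (F (φ u)) with hG
  have hGc : Continuous G := by
    apply Continuous.comp (g := ψ)
    · apply continuous_pi
      intro c
      exact ((continuous_apply c).add continuous_const).div_const _
    · apply hF.comp
      apply continuous_pi
      intro c
      exact (continuous_const.mul (continuous_apply c)).sub continuous_const
  have hGmaps : ∀ u, inT u → inT (G u) := by
    intro u _
    have h0 := hK (φ u) 0
    have h1 := hK (φ u) 1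
    rw [abs_le] at h0 h1
    refine ⟨?_, ?_, ?_⟩
    · show (0:ℝ) ≤ (F (φ u) 0 + s) / (3 * s)
      apply div_nonneg _ (le_of_lt hs3)
      simp only [hs]; linarith [h0.1]
    · show (0:ℝ) ≤ (F (φ u) 1 + s) / (3 * s)
      apply div_nonneg _ (le_of_lt hs3)
      simp only [hs]; linarith [h1.1]
    · show (F (φ u) 0 + s) / (3 * s) + (F (φ u) 1 + s) / (3 * s) ≤ 1
      rw [← add_div, div_le_one hs3]
      simp only [hs]; linarith [h0.2, h1.2]
  obtain ⟨u, _, hu⟩ := brouwer_corner G hGc hGmaps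
  refine ⟨φ u, ?_⟩
  have key : φ (G u) = F (φ u) := by
    funext c
    show 3 * s * ((F (φ u) c + s) / (3 * s)) - s = F (φ u) c
    field_simp
    ring
  rw [← key, hu]

/-- Trajectory of the (generally nonlinear) difference system `x(t+1) = A x(t) + H t (x t)`. -/
def traj (A : Matrix (Fin 2) (Fin 2) ℝ) (H : ℕ → (Fin 2 → ℝ) → (Fin 2 → ℝ))
    (v : Fin 2 → ℝ) : ℕ → Fin 2 → ℝ
  | 0 => v
  | t + 1 => A *ᵥ (traj A H v t) + H t (traj A H v t)

lemma traj_zero (A : Matrix (Fin 2) (Fin 2) ℝ) (H : ℕ → (Fin 2 → ℝ) → (Fin 2 → ℝ))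
    (v : Fin 2 → ℝ) : traj A H v 0 = v := by rw [traj]

lemma traj_succ (A : Matrix (Fin 2) (Fin 2) ℝ) (H : ℕ → (Fin 2 → ℝ) → (Fin 2 → ℝ))
    (v : Fin 2 → ℝ) (t : ℕ) :
    traj A H v (t + 1) = A *ᵥ (traj A H v t) + H t (traj A H v t) := by rw [traj]

lemma traj_unique (A : Matrix (Fin 2) (Fin 2) ℝ) (H : ℕ → (Fin 2 → ℝ) → (Fin 2 → ℝ))
    (x : ℕ → Fin 2 → ℝ) (hx : ∀ t, x (t + 1) = A *ᵥ x t + H t (x t)) :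
    ∀ t, x t = traj A H (x 0) t := by
  intro t
  induction t with
  | zero => rw [traj_zero]
  | succ t ih => rw [hx t, ih, traj_succ]

lemma traj_periodic (A : Matrix (Fin 2) (Fin 2) ℝ) (H : ℕ → (Fin 2 → ℝ) → (Fin 2 → ℝ))
    (N : ℕ) (hH : ∀ t u, H (t + N) u = H t u) (v : Fin 2 → ℝ)
    (hv : traj A H v N = v) : ∀ t, traj A H v (t + N) = traj A H v t := by
  intro t
  induction t with
  | zero => rw [Nat.zero_add, traj_zero]; exact hv
  | succ t ih =>
    have : t + 1 + N = (t + N) + 1 := by omega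
    rw [this, traj_succ, traj_succ, ih, hH]

lemma traj_cont (A : Matrix (Fin 2) (Fin 2) ℝ) (H : ℕ → (Fin 2 → ℝ) → (Fin 2 → ℝ))
    (hH : ∀ t, Continuous (H t)) (t : ℕ) : Continuous (fun v => traj A H v t) := by
  induction t with
  | zero => exact continuous_id
  | succ t ih =>
    have hmv : Continuous (fun u : Fin 2 → ℝ => A *ᵥ u) := by
      have h := A.mulVecLin.continuous_of_finiteDimensional
      have : (fun u : Fin 2 → ℝ => A *ᵥ u) = ⇑A.mulVecLin := by
        funext u; rw [Matrix.mulVecLin_apply]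
      rw [this]; exact h
    show Continuous (fun v => A *ᵥ (traj A H v t) + H t (traj A H v t))
    exact (hmv.comp ih).add ((hH t).comp ih)

lemma traj_affine (A : Matrix (Fin 2) (Fin 2) ℝ) (h : ℕ → Fin 2 → ℝ) (v : Fin 2 → ℝ)
    (t : ℕ) : traj A (fun t _ => h t) v t = (A ^ t) *ᵥ v + traj A (fun t _ => h t) 0 t := by
  induction t with
  | zero => simp [traj_zero, Matrix.one_mulVec]
  | succ t ih =>
    rw [traj_succ, traj_succ, ih]
    rw [Matrix.mulVec_add, Matrix.mulVec_mulVec, ← pow_succ']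
    abel

/-- Recursive bound sequence. -/
def geomB (a d : ℝ) : ℕ → ℝ
  | 0 => 0
  | t + 1 => a * geomB a d t + d

lemma geomB_nonneg {a d : ℝ} (ha : 0 ≤ a) (hd : 0 ≤ d) : ∀ t, 0 ≤ geomB a d t
  | 0 => le_refl 0
  | t + 1 => by
    have := geomB_nonneg ha hd t
    show 0 ≤ a * geomB a d t + d
    positivity

end NRE

namespace NRE

lemma continuous_mulVec (M : Matrix (Fin 2) (Fin 2) ℝ) :
    Continuous (fun u : Fin 2 → ℝ => M *ᵥ u) := by
  have h := M.mulVecLin.continuous_of_finiteDimensional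
  have e : (fun u : Fin 2 → ℝ => M *ᵥ u) = ⇑M.mulVecLin := by
    funext u; rw [Matrix.mulVecLin_apply]
  rw [e]; exact h

lemma bddAbove_euclNorm2_of_periodic (N : ℕ) (hN : 0 < N) (z : ℕ → Fin 2 → ℝ)
    (hz : ∀ t, z (t + N) = z t) : BddAbove (Set.range fun t => euclNorm2 (z t)) := by
  have hmod : ∀ t, z t = z (t % N) := by
    intro t
    induction t using Nat.strong_induction_on with
    | _ t ih =>
      by_cases ht : t < N
      · rw [Nat.mod_eq_of_lt ht]
      · push_neg at ht
        have h1 : t - N + N = t := by omega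
        have h2 := hz (t - N)
        rw [h1] at h2
        rw [h2, ih (t - N) (by omega), Nat.mod_eq_sub_mod ht]
  have hne : (Finset.range N).Nonempty := Finset.nonempty_range_iff.mpr (by omega)
  set R : ℝ := (Finset.range N).sup' hne (fun t => euclNorm2 (z t)) with hR
  refine ⟨R, ?_⟩
  intro w hw
  obtain ⟨t, rfl⟩ := hw
  have key : euclNorm2 (z t) ≤ R := by
    rw [hmod t, hR]
    exact Finset.le_sup' (fun t => euclNorm2 (z t)) (Finset.mem_range.mpr (Nat.mod_lt t hN))
  exact key

end NRE

open NRE in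
/-- If `Ker(I − A^N) = {0}` then `𝓛 : X_N → X_N` is bijective; moreover, if
`g` is continuous in `x`, `N`-periodic in `t`, `|g(t,x)| ≤ δ` on `[−2r, 2r]`, and
`‖𝓛⁻¹‖·δ < r` (expressed via the inverse `Li` of `𝓛` on `X_N` and any bound `C` for its
operator norm), then the difference equation has an `N`-periodic solution `y` with
`sup_t |(y(t), y(t+1))| ≤ r`. -/
theorem nonresonant_existence
    (N : ℕ) (hN : 1 < N) (b c : ℝ) (hc : c ≠ 0)
    (A : Matrix (Fin 2) (Fin 2) ℝ) (hA : A = !![0, 1; -c, -b])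
    (htriv : ∀ v : Fin 2 → ℝ, (1 - A ^ N) *ᵥ v = 0 → v = 0) :
    (∀ h : ℕ → Fin 2 → ℝ, (∀ t : ℕ, h (t + N) = h t) →
      ∃! x : ℕ → Fin 2 → ℝ, (∀ t : ℕ, x (t + N) = x t) ∧
        ∀ t : ℕ, x (t + 1) - A *ᵥ x t = h t) ∧
    ∀ (g : ℕ → ℝ → ℝ), (∀ t : ℕ, Continuous (g t)) →
      (∀ (t : ℕ) (x : ℝ), g (t + N) x = g t x) →
    ∀ (r δ : ℝ), 0 < r → 0 < δ →
      (∀ (t : ℕ) (x : ℝ), x ∈ Set.Icc (-(2 * r)) (2 * r) → |g t x| ≤ δ) →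
      ∀ (Li : (ℕ → Fin 2 → ℝ) → (ℕ → Fin 2 → ℝ)) (C : ℝ),
        (∀ h : ℕ → Fin 2 → ℝ, (∀ t : ℕ, h (t + N) = h t) →
          (∀ t : ℕ, Li h (t + N) = Li h t) ∧
          ∀ t : ℕ, Li h (t + 1) - A *ᵥ Li h t = h t) →
        (∀ h : ℕ → Fin 2 → ℝ, (∀ t : ℕ, h (t + N) = h t) →
          supNorm (Li h) ≤ C * supNorm h) →
        C * δ < r →
        ∃ y : ℕ → ℝ, (∀ t : ℕ, y (t + N) = y t) ∧
          (∀ t : ℕ, y (t + 2) + b * y (t + 1) + c * y t = g t (y t)) ∧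
          ∀ t : ℕ, euclNorm2 ![y t, y (t + 1)] ≤ r := by
  classical
  set B : Matrix (Fin 2) (Fin 2) ℝ := 1 - A ^ N with hB
  have hBinj : Function.Injective B.mulVecLin := by
    intro u w huw
    have h1 : B *ᵥ (u - w) = 0 := by
      rw [Matrix.mulVec_sub]
      simp only [Matrix.mulVecLin_apply] at huw
      rw [huw, sub_self]
    exact sub_eq_zero.mp (htriv _ h1)
  have hBsurj : Function.Surjective B.mulVecLin :=
    (LinearMap.injective_iff_surjective).mp hBinj
  set Beq : (Fin 2 → ℝ) ≃ₗ[ℝ] (Fin 2 → ℝ) :=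
    LinearEquiv.ofBijective B.mulVecLin ⟨hBinj, hBsurj⟩ with hBeq
  have hBeq_apply : ∀ u, Beq u = B *ᵥ u := by
    intro u
    rw [hBeq]; exact Matrix.mulVecLin_apply B u
  have hBv : ∀ u, B *ᵥ u = u - A ^ N *ᵥ u := by
    intro u; rw [hB, Matrix.sub_mulVec, Matrix.one_mulVec]
  -- uniqueness of periodic solutions for a fixed forcing term
  have uniq : ∀ (h : ℕ → Fin 2 → ℝ) (x x' : ℕ → Fin 2 → ℝ),
      (∀ t, x (t + N) = x t) → (∀ t, x' (t + N) = x' t) →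
      (∀ t, x (t + 1) - A *ᵥ x t = h t) → (∀ t, x' (t + 1) - A *ᵥ x' t = h t) → x = x' := by
    intro h x x' hpx hpx' hsx hsx'
    have hsx1 : ∀ t, x (t + 1) = A *ᵥ x t + (fun (t : ℕ) (_ : Fin 2 → ℝ) => h t) t (x t) := by
      intro t
      have := hsx t
      rw [sub_eq_iff_eq_add] at this
      rw [this, add_comm]
    have hsx1' : ∀ t, x' (t + 1) = A *ᵥ x' t + (fun (t : ℕ) (_ : Fin 2 → ℝ) => h t) t (x' t) := by
      intro t
      have := hsx' t
      rw [sub_eq_iff_eq_add] at this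
      rw [this, add_comm]
    have hx := traj_unique A (fun (t : ℕ) (_ : Fin 2 → ℝ) => h t) x hsx1
    have hx' := traj_unique A (fun (t : ℕ) (_ : Fin 2 → ℝ) => h t) x' hsx1'
    have hxN : x N = x 0 := by have := hpx 0; rwa [Nat.zero_add] at this
    have hx'N : x' N = x' 0 := by have := hpx' 0; rwa [Nat.zero_add] at this
    have e1 : B *ᵥ (x 0) = traj A (fun t _ => h t) 0 N := by
      have h2 := hx N
      rw [hxN, traj_affine] at h2
      rw [hBv]
      exact sub_eq_of_eq_add' h2
    have e1' : B *ᵥ (x' 0) = traj A (fun t _ => h t) 0 N := by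
      have h2 := hx' N
      rw [hx'N, traj_affine] at h2
      rw [hBv]
      exact sub_eq_of_eq_add' h2
    have h0 : x 0 = x' 0 := by
      have hdiff : B *ᵥ (x 0 - x' 0) = 0 := by
        rw [Matrix.mulVec_sub, e1, e1', sub_self]
      exact sub_eq_zero.mp (htriv _ hdiff)
    funext t
    rw [hx t, hx' t, h0]
  constructor
  · -- Part 1
    intro h hper
    obtain ⟨v, hv⟩ := hBsurj (traj A (fun t _ => h t) 0 N)
    have hv' : B *ᵥ v = traj A (fun t _ => h t) 0 N := by
      rw [← Matrix.mulVecLin_apply]; exact hv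
    have hfix : traj A (fun t _ => h t) v N = v := by
      rw [traj_affine, ← hv']
      rw [hBv]
      abel
    refine ⟨traj A (fun t _ => h t) v, ⟨?_, ?_⟩, ?_⟩
    · exact traj_periodic A _ N (fun t u => by simp only [hper]) v hfix
    · intro t
      rw [traj_succ]
      exact add_sub_cancel_left _ _
    · intro z hz
      exact uniq h z (traj A (fun t _ => h t) v) hz.1
        (traj_periodic A _ N (fun t u => by simp only [hper]) v hfix) hz.2
        (fun t => by rw [traj_succ]; exact add_sub_cancel_left _ _)
  · -- Part 2
    intro g hgc hgper r δ hr hδ hgb Li C hLiprop hLinorm hCr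
    set clamp : ℝ → ℝ := fun x => max (-(2*r)) (min (2*r) x) with hclamp
    have hclampmem : ∀ x : ℝ, clamp x ∈ Set.Icc (-(2*r)) (2*r) := by
      intro x
      constructor
      · exact le_max_left _ _
      · exact max_le (by linarith) (min_le_left _ _)
    have hclampid : ∀ x : ℝ, -(2*r) ≤ x → x ≤ 2*r → clamp x = x := by
      intro x h1 h2
      rw [hclamp]
      simp only
      rw [min_eq_right h2, max_eq_right h1]
    have hclampcont : Continuous clamp := continuous_const.max (continuous_const.min continuous_id)
    set H : ℕ → (Fin 2 → ℝ) → (Fin 2 → ℝ) :=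
      fun t u i => if i = 0 then 0 else g t (clamp (u 0)) with hHdef
    have hH0 : ∀ t u, H t u 0 = 0 := fun t u => rfl
    have hH1 : ∀ t u, H t u 1 = g t (clamp (u 0)) := fun t u => rfl
    have hHper : ∀ t u, H (t + N) u = H t u := by
      intro t u
      funext i
      rcases fin2_cases i with rfl | rfl
      · rw [hH0, hH0]
      · rw [hH1, hH1, hgper]
    have hHb : ∀ t u (i : Fin 2), |H t u i| ≤ δ := by
      intro t u i
      rcases fin2_cases i with rfl | rfl
      · rw [hH0, abs_zero]; linarith
      · rw [hH1]; exact hgb t _ (hclampmem _)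
    have hHcont : ∀ t, Continuous (H t) := by
      intro t
      apply continuous_pi
      intro i
      rcases fin2_cases i with rfl | rfl
      · have e : (fun u : Fin 2 → ℝ => H t u 0) = fun _ => 0 := funext fun u => hH0 t u
        rw [e]; exact continuous_const
      · have e : (fun u : Fin 2 → ℝ => H t u 1) = fun u => g t (clamp (u 0)) :=
          funext fun u => hH1 t u
        rw [e]; exact (hgc t).comp (hclampcont.comp (continuous_apply 0))
    have hAmul : ∀ u : Fin 2 → ℝ, (A *ᵥ u) 0 = u 1 ∧ (A *ᵥ u) 1 = -c * u 0 - b * u 1 := by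
      intro u
      constructor <;> rw [hA] <;>
        simp [Matrix.mulVec, dotProduct, Fin.sum_univ_two] <;> ring
    set a : ℝ := 1 + |b| + |c| with ha
    have ha0 : 0 ≤ a := by positivity
    have hAbound : ∀ (u : Fin 2 → ℝ) (i : Fin 2), |(A *ᵥ u) i| ≤ a * max |u 0| |u 1| := by
      intro u i
      have h0 := (hAmul u).1
      have h1 := (hAmul u).2
      have hm1 : |u 1| ≤ max |u 0| |u 1| := le_max_right _ _
      have hm0 : |u 0| ≤ max |u 0| |u 1| := le_max_left _ _
      have hmn : 0 ≤ max |u 0| |u 1| := le_trans (abs_nonneg _) hm0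
      rcases fin2_cases i with rfl | rfl
      · rw [h0, ha]; nlinarith [abs_nonneg b, abs_nonneg c]
      · rw [h1]
        have e : -c * u 0 - b * u 1 = (-(c * u 0)) + (-(b * u 1)) := by ring
        have e2 : |(-c * u 0 - b * u 1)| ≤ |c| * |u 0| + |b| * |u 1| := by
          rw [e]
          refine le_trans (abs_add_le _ _) ?_
          rw [abs_neg, abs_neg, abs_mul, abs_mul]
        rw [ha]
        nlinarith [abs_nonneg b, abs_nonneg c]
    have hdev : ∀ (v : Fin 2 → ℝ) (t : ℕ) (i : Fin 2),
        |traj A H v t i - (A ^ t *ᵥ v) i| ≤ geomB a δ t := by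
      intro v t
      induction t with
      | zero =>
        intro i
        rw [traj_zero, pow_zero, Matrix.one_mulVec]
        simp [geomB]
      | succ t ih =>
        intro i
        have e3 : A ^ (t+1) *ᵥ v = A *ᵥ (A ^ t *ᵥ v) := by
          rw [Matrix.mulVec_mulVec, ← pow_succ']
        have hid : traj A H v (t+1) i - (A ^ (t+1) *ᵥ v) i
            = (A *ᵥ (fun j => traj A H v t j - (A ^ t *ᵥ v) j)) i + H t (traj A H v t) i := by
          rw [traj_succ, e3]
          have e4 : (fun j => traj A H v t j - (A ^ t *ᵥ v) j)
              = traj A H v t - A ^ t *ᵥ v := rfl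
          rw [e4, Matrix.mulVec_sub]
          simp only [Pi.add_apply, Pi.sub_apply]
          ring
        rw [hid]
        have b1 := hAbound (fun j => traj A H v t j - (A ^ t *ᵥ v) j) i
        have b2 := hHb t (traj A H v t) i
        have hmax : max |traj A H v t 0 - (A ^ t *ᵥ v) 0| |traj A H v t 1 - (A ^ t *ᵥ v) 1|
            ≤ geomB a δ t := max_le (ih 0) (ih 1)
        have egB : geomB a δ (t+1) = a * geomB a δ t + δ := by rw [geomB]
        rw [egB]
        refine le_trans (abs_add_le _ _) ?_
        have b1' : |(A *ᵥ (fun j => traj A H v t j - (A ^ t *ᵥ v) j)) i| ≤ a * geomB a δ t :=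
          le_trans b1 (mul_le_mul_of_nonneg_left hmax ha0)
        linarith
    set K : ℝ := geomB a δ N with hK
    have hK0 : 0 ≤ K := geomB_nonneg ha0 (le_of_lt hδ) N
    set Q : (Fin 2 → ℝ) → (Fin 2 → ℝ) := fun v => traj A H v N - A ^ N *ᵥ v with hQ
    have hQb : ∀ (v : Fin 2 → ℝ) (i : Fin 2), |Q v i| ≤ K := fun v i => hdev v N i
    have hQc : Continuous Q := (traj_cont A H hHcont N).sub (continuous_mulVec (A ^ N))
    set p0 : Fin 2 → ℝ := fun i => if i = 0 then 1 else 0 with hp0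
    set p1 : Fin 2 → ℝ := fun i => if i = 0 then 0 else 1 with hp1
    have hdecomp : ∀ w : Fin 2 → ℝ, w = w 0 • p0 + w 1 • p1 := by
      intro w
      funext i
      rcases fin2_cases i with rfl | rfl <;>
        simp [hp0, hp1]
    set sp : Fin 2 → ℝ := Beq.symm p0 with hsp
    set sq : Fin 2 → ℝ := Beq.symm p1 with hsq
    have hsymm_apply : ∀ w : Fin 2 → ℝ, Beq.symm w = w 0 • sp + w 1 • sq := by
      intro w
      conv_lhs => rw [hdecomp w]
      rw [map_add, _root_.map_smul, _root_.map_smul]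
    set Kp : ℝ := K * ((|sp 0| + |sp 1|) + (|sq 0| + |sq 1|)) with hKp
    set Φ : (Fin 2 → ℝ) → (Fin 2 → ℝ) := fun v => Beq.symm (Q v) with hΦ
    have hlin : Continuous (fun w : Fin 2 → ℝ => Beq.symm w) :=
      Beq.symm.toLinearMap.continuous_of_finiteDimensional
    have hΦc : Continuous Φ := hlin.comp hQc
    have hΦb : ∀ (v : Fin 2 → ℝ) (i : Fin 2), |Φ v i| ≤ Kp := by
      intro v i
      have e : Φ v = Q v 0 • sp + Q v 1 • sq := hsymm_apply (Q v)
      rw [e]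
      simp only [Pi.add_apply, Pi.smul_apply, smul_eq_mul]
      have q0 := hQb v 0
      have q1 := hQb v 1
      have habs : |Q v 0 * sp i + Q v 1 * sq i| ≤ |Q v 0| * |sp i| + |Q v 1| * |sq i| := by
        refine le_trans (abs_add_le _ _) ?_
        rw [abs_mul, abs_mul]
      have hspi : |sp i| ≤ |sp 0| + |sp 1| := by
        rcases fin2_cases i with rfl | rfl
        · linarith [abs_nonneg (sp 1)]
        · linarith [abs_nonneg (sp 0)]
      have hsqi : |sq i| ≤ |sq 0| + |sq 1| := by
        rcases fin2_cases i with rfl | rfl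
        · linarith [abs_nonneg (sq 1)]
        · linarith [abs_nonneg (sq 0)]
      have m1 : |Q v 0| * |sp i| ≤ K * (|sp 0| + |sp 1|) :=
        mul_le_mul q0 hspi (abs_nonneg _) hK0
      have m2 : |Q v 1| * |sq i| ≤ K * (|sq 0| + |sq 1|) :=
        mul_le_mul q1 hsqi (abs_nonneg _) hK0
      rw [hKp]
      linarith
    obtain ⟨v, hfixv⟩ := bounded_fixed Φ hΦc Kp hΦb
    have hQBv : Q v = Beq v := (LinearEquiv.symm_apply_eq Beq).mp hfixv
    have htrajfix : traj A H v N = v := by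
      have h2 : traj A H v N - A ^ N *ᵥ v = v - A ^ N *ᵥ v := by
        have : Q v = v - A ^ N *ᵥ v := by rw [hQBv, hBeq_apply, hBv]
        rw [← this, hQ]
      exact sub_left_inj.mp h2
    set x : ℕ → Fin 2 → ℝ := fun t => traj A H v t with hx
    have hxper : ∀ t, x (t + N) = x t := fun t => traj_periodic A H N hHper v htrajfix t
    have hxrec : ∀ t, x (t + 1) = A *ᵥ x t + H t (x t) := fun t => traj_succ A H v t
    set y : ℕ → ℝ := fun t => x t 0 with hy
    have hx10 : ∀ t, x (t + 1) 0 = x t 1 := by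
      intro t
      rw [hxrec t, Pi.add_apply, (hAmul (x t)).1, hH0, add_zero]
    have hyrec : ∀ t, y (t + 2) + b * y (t + 1) + c * y t = g t (clamp (y t)) := by
      intro t
      have e1 : y (t+2) = x (t+1) 1 := hx10 (t+1)
      have e2 : x (t+1) 1 = -c * x t 0 - b * x t 1 + g t (clamp (x t 0)) := by
        rw [hxrec t, Pi.add_apply, (hAmul (x t)).2, hH1]
      have e3 : y (t+1) = x t 1 := hx10 t
      have e4 : y t = x t 0 := rfl
      rw [e1, e2, e3, e4]
      ring
    set h : ℕ → Fin 2 → ℝ := fun t => H t (x t) with hh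
    have hhper : ∀ t, h (t + N) = h t := by
      intro t
      show H (t + N) (x (t + N)) = H t (x t)
      rw [hxper t, hHper]
    have hxsol : ∀ t, x (t + 1) - A *ᵥ x t = h t := by
      intro t
      rw [hxrec t]
      exact add_sub_cancel_left _ _
    obtain ⟨hLiper, hLisol⟩ := hLiprop h hhper
    have hxLi : x = Li h := uniq h x (Li h) hxper hLiper hxsol hLisol
    have hsh : supNorm h ≤ δ := by
      apply ciSup_le
      intro t
      have e : euclNorm2 (h t) = |g t (clamp (y t))| := by
        rw [euclNorm2]
        have e0 : h t 0 = 0 := hH0 t (x t)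
        have e1 : h t 1 = g t (clamp (x t 0)) := hH1 t (x t)
        rw [e0, e1]
        rw [show (0:ℝ)^2 + (g t (clamp (x t 0)))^2 = (g t (clamp (x t 0)))^2 by ring]
        exact Real.sqrt_sq_eq_abs _
      rw [e]
      exact hgb t _ (hclampmem _)
    have hbddx : BddAbove (Set.range fun t => euclNorm2 (x t)) :=
      bddAbove_euclNorm2_of_periodic N (by omega) x hxper
    have hsnn : 0 ≤ supNorm h := Real.iSup_nonneg fun t => Real.sqrt_nonneg _
    have hxbound : ∀ t, euclNorm2 (x t) ≤ r := by
      have hle : supNorm x ≤ C * supNorm h := by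
        rw [hxLi]; exact hLinorm h hhper
      intro t
      have h1 : euclNorm2 (x t) ≤ supNorm x := le_ciSup hbddx t
      rcases eq_or_lt_of_le hsnn with heq | hpos
      · rw [← heq, mul_zero] at hle
        linarith
      · have hC : 0 ≤ C := by
          have h2 : 0 ≤ supNorm (Li h) := Real.iSup_nonneg fun t => Real.sqrt_nonneg _
          have h3 := hLinorm h hhper
          nlinarith
        have h4 : C * supNorm h ≤ C * δ := mul_le_mul_of_nonneg_left hsh hC
        linarith
    have hyb : ∀ t, |y t| ≤ r := by
      intro t
      have h1 : |x t 0| ≤ euclNorm2 (x t) := by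
        rw [euclNorm2, ← Real.sqrt_sq_eq_abs]
        apply Real.sqrt_le_sqrt
        nlinarith [sq_nonneg (x t 1)]
      exact le_trans h1 (hxbound t)
    refine ⟨y, ?_, ?_, ?_⟩
    · intro t
      show x (t + N) 0 = x t 0
      rw [hxper]
    · intro t
      have e := hyrec t
      have hb1 := hyb t
      rw [abs_le] at hb1
      rwa [hclampid (y t) (by linarith) (by linarith)] at e
    · intro t
      have e : euclNorm2 ![y t, y (t+1)] = euclNorm2 (x t) := by
        rw [euclNorm2, euclNorm2]
        have e0 : (![y t, y (t+1)] : Fin 2 → ℝ) 0 = x t 0 := by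
          rw [Matrix.cons_val_zero]
        have e1 : (![y t, y (t+1)] : Fin 2 → ℝ) 1 = x t 1 := by
          rw [Matrix.cons_val_one, Matrix.cons_val_zero]
          exact hx10 t
        rw [e0, e1]
      rw [e]
      exact hxbound t
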